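/- Let Z : R^n → R^{k+m} be a surjective linear map with row span W (an element of Gr_{k+m,n}). Then the map f_Z sending an m-dimensional subspace X of W to Z(X^⊥) is a well-defined bijection from the set of m-dimensional subspaces of W onto the set of k-dimensional subspaces of R^{k+m}. -/
import Mathlib

open scoped BigOperators

noncomputable def listVar : List ℝ → ℕ
  | a :: b :: t => (if a * b < 0 then 1 else 0) + listVar (b :: t)
  | _ => 0

noncomputable def var {n : ℕ} (v : Fin n → ℝ) : ℕ :=
  listVar ((List.ofFn v).filter (fun x => x ≠ 0))

noncomputable def varbar {n : ℕ} (v : Fin n → ℝ) : ℕ :=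
  sSup {m | ∃ w : Fin n → ℝ, (∀ i, v i ≠ 0 → w i = v i) ∧ var w = m}

def altv {n : ℕ} (v : Fin n → ℝ) : Fin n → ℝ := fun i => (-1 : ℝ) ^ (i : ℕ) * v i

def IsSignVec {n : ℕ} (σ : Fin n → ℝ) : Prop := ∀ i, σ i = 0 ∨ σ i = 1 ∨ σ i = -1

/-- Rank formula for the image of a submodule containing the kernel. -/
lemma finrank_map_of_ker_le {M N : Type*} [AddCommGroup M] [Module ℝ M]
    [AddCommGroup N] [Module ℝ N] [FiniteDimensional ℝ M]
    (Z : M →ₗ[ℝ] N) (p : Submodule ℝ M) (h : LinearMap.ker Z ≤ p) :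
    Module.finrank ℝ (Submodule.map Z p) + Module.finrank ℝ (LinearMap.ker Z)
      = Module.finrank ℝ p := by
  have h1 := LinearMap.finrank_range_add_finrank_ker (Z ∘ₗ p.subtype)
  have hr : LinearMap.range (Z ∘ₗ p.subtype) = Submodule.map Z p := by
    rw [LinearMap.range_comp, Submodule.range_subtype]
  have hk : LinearMap.ker (Z ∘ₗ p.subtype) = Submodule.comap p.subtype (LinearMap.ker Z) := by
    rw [LinearMap.ker_comp]
  have hek : Module.finrank ℝ (LinearMap.ker (Z ∘ₗ p.subtype))
      = Module.finrank ℝ (LinearMap.ker Z) := by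
    rw [hk]
    exact (Submodule.comapSubtypeEquivOfLe h).finrank_eq
  rw [hr, hek] at h1
  exact h1

theorem stmt2 (n k m : ℕ)
    (Z : EuclideanSpace ℝ (Fin n) →ₗ[ℝ] EuclideanSpace ℝ (Fin (k + m)))
    (hZ : Function.Surjective Z) :
    Set.BijOn (fun X : Submodule ℝ (EuclideanSpace ℝ (Fin n)) => Submodule.map Z Xᗮ)
      {X | X ≤ (LinearMap.ker Z)ᗮ ∧ Module.finrank ℝ X = m}
      {Y : Submodule ℝ (EuclideanSpace ℝ (Fin (k + m))) | Module.finrank ℝ Y = k} := by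
  have hE : Module.finrank ℝ (EuclideanSpace ℝ (Fin n)) = n := finrank_euclideanSpace_fin
  have hE2 : Module.finrank ℝ (EuclideanSpace ℝ (Fin (k + m))) = k + m :=
    finrank_euclideanSpace_fin
  -- dimension of the kernel
  have hrange : LinearMap.range Z = ⊤ := LinearMap.range_eq_top.2 hZ
  have hrn := LinearMap.finrank_range_add_finrank_ker Z
  rw [hrange, finrank_top, hE2, hE] at hrn
  set d := Module.finrank ℝ (LinearMap.ker Z) with hd
  -- key: for X in the source set, ker Z ≤ Xᗮ
  have hker_le : ∀ X : Submodule ℝ (EuclideanSpace ℝ (Fin n)),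
      X ≤ (LinearMap.ker Z)ᗮ → LinearMap.ker Z ≤ Xᗮ := fun X hX =>
    le_trans (Submodule.le_orthogonal_orthogonal _) (Submodule.orthogonal_le hX)
  have hdim_orth : ∀ X : Submodule ℝ (EuclideanSpace ℝ (Fin n)),
      Module.finrank ℝ X + Module.finrank ℝ Xᗮ = n := by
    intro X
    exact (Submodule.finrank_add_finrank_orthogonal X).trans hE
  constructor
  · -- MapsTo
    intro X hX
    obtain ⟨hX1, hX2⟩ := hX
    have h1 := finrank_map_of_ker_le Z Xᗮ (hker_le X hX1)
    have h2 := hdim_orth X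
    simp only [Set.mem_setOf_eq]
    omega
  constructor
  · -- InjOn
    intro X₁ h₁ X₂ h₂ heq
    simp only at heq
    have e1 : X₁ᗮ = Submodule.comap Z (Submodule.map Z X₁ᗮ) := by
      rw [Submodule.comap_map_eq, sup_eq_left.2 (hker_le X₁ h₁.1)]
    have e2 : X₂ᗮ = Submodule.comap Z (Submodule.map Z X₂ᗮ) := by
      rw [Submodule.comap_map_eq, sup_eq_left.2 (hker_le X₂ h₂.1)]
    have : X₁ᗮ = X₂ᗮ := by rw [e1, e2, heq]
    calc X₁ = X₁ᗮᗮ := (Submodule.orthogonal_orthogonal X₁).symm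
    _ = X₂ᗮᗮ := by rw [this]
    _ = X₂ := Submodule.orthogonal_orthogonal X₂
  · -- SurjOn
    intro Y hY
    simp only [Set.mem_setOf_eq] at hY
    refine ⟨(Submodule.comap Z Y)ᗮ, ⟨?_, ?_⟩, ?_⟩
    · exact Submodule.orthogonal_le (LinearMap.ker_le_comap Z)
    · have h1 := finrank_map_of_ker_le Z (Submodule.comap Z Y) (LinearMap.ker_le_comap Z)
      rw [Submodule.map_comap_eq_of_surjective hZ, hY] at h1
      have h2 := hdim_orth (Submodule.comap Z Y)
      omega
    · simp only
      rw [Submodule.orthogonal_orthogonal, Submodule.map_comap_eq_of_surjective hZ]
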